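/- Let ε be a real number with 0 ≤ ε < 1/9, and let x_u, x_v, s, c, w ∈ [0, 1] satisfy: |s − min(x_u + x_v, 1)| ≤ ε; |c − 5/9| ≤ ε; if s < c − ε then w ≥ 1 − ε; and if s > c + ε then w ≤ ε. Then: (1) if x_u ≤ ε and x_v ≤ ε, then w ≥ 1 − ε; and (2) if x_u ≥ 1 − ε or x_v ≥ 1 − ε, then w ≤ ε. -/
import Mathlib


/-- Correctness of the generalized-circuit simulation of a Pure-Circuit NOR
gate via `G₊`, `G_c` (constant 5/9), and `G_<`, for every `ε < 1/9`. -/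
theorem gcircuit_nor_gadget (ε xu xv s c w : ℝ)
    (hε0 : 0 ≤ ε) (hε1 : ε < 1 / 9)
    (hxu : xu ∈ Set.Icc (0:ℝ) 1) (hxv : xv ∈ Set.Icc (0:ℝ) 1)
    (hs : s ∈ Set.Icc (0:ℝ) 1) (hc : c ∈ Set.Icc (0:ℝ) 1)
    (hw : w ∈ Set.Icc (0:ℝ) 1)
    (hsum : |s - min (xu + xv) 1| ≤ ε)
    (hconst : |c - 5 / 9| ≤ ε)
    (hlt : s < c - ε → 1 - ε ≤ w)
    (hgt : s > c + ε → w ≤ ε) :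
    (xu ≤ ε ∧ xv ≤ ε → 1 - ε ≤ w) ∧
    ((1 - ε ≤ xu ∨ 1 - ε ≤ xv) → w ≤ ε) := by
  rw [abs_le] at hsum hconst
  constructor
  · rintro ⟨hu, hv⟩
    have hmin : min (xu + xv) 1 = xu + xv := min_eq_left (by linarith)
    rw [hmin] at hsum
    exact hlt (by linarith [hsum.2, hconst.1])
  · intro h
    have h1 : (1 : ℝ) - ε ≤ xu + xv := by
      rcases h with h | h
      · linarith [hxv.1]
      · linarith [hxu.1]
    have hmin : 1 - ε ≤ min (xu + xv) 1 := le_min h1 (by linarith)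
    exact hgt (by linarith [hsum.1, hconst.2])
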